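/- Let G = (V, E) be a finite simple graph whose vertex set is partitioned into nonempty sets A and B with |B| = N_B even, let |G⟩ be the associated graph state, let G_B be the partial trace over the A qubits of |G⟩⟨G|, and let G̃_B = σ_y^{⊗N_B} G_B* σ_y^{⊗N_B}. Let Γ_BA be the N_B × N_A block of the adjacency matrix of G over F₂ recording edges between B and A, and let D ∈ F₂^B be the vector with D_b = 1 if and only if b has even degree in the induced subgraph G − A on B. Then F(G_B, G̃_B) = 1 if the equation Γ_BA x = D has a solution x ∈ F₂^A (arithmetic modulo 2), and F(G_B, G̃_B) = 0 otherwise. -/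

import Mathlib

open scoped BigOperators ComplexConjugate ComplexOrder

noncomputable section

namespace QIpaper

/-- Inner product `⟨ψ|φ⟩`, conjugate-linear in the first argument. -/
def braket {I : Type*} [Fintype I] (ψ φ : I → ℂ) : ℂ := ∑ x, conj (ψ x) * φ x

/-- Outer product `|ψ⟩⟨ψ|`. -/
def dm {I : Type*} (ψ : I → ℂ) : Matrix I I ℂ := Matrix.of fun x y => ψ x * conj (ψ y)

open Classical in
/-- Positive semidefinite square root (junk value `0` on non-PSD matrices). -/
def psdSqrt {I : Type*} [Fintype I] [DecidableEq I] (A : Matrix I I ℂ) : Matrix I I ℂ :=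
  if h : A.PosSemidef then h.1.eigenvectorUnitary.1 *
    Matrix.diagonal ((↑) ∘ Real.sqrt ∘ h.1.eigenvalues) *
    (star h.1.eigenvectorUnitary : Matrix I I ℂ) else 0

/-- The trace norm `‖A‖₁ = tr √(AᴴA)`. -/
def traceNorm {I : Type*} [Fintype I] [DecidableEq I] (A : Matrix I I ℂ) : ℝ :=
  (psdSqrt (A.conjTranspose * A)).trace.re

/-- Fidelity `F(ρ,σ) = tr √(√ρ σ √ρ)`. -/
def fidelity {I : Type*} [Fintype I] [DecidableEq I] (ρ σ : Matrix I I ℂ) : ℝ :=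
  (psdSqrt (psdSqrt ρ * σ * psdSqrt ρ)).trace.re

/-- Purity `tr(ρ²)`. -/
def purity {I : Type*} [Fintype I] (ρ : Matrix I I ℂ) : ℝ := ((ρ * ρ).trace).re

def sigmaX : Matrix (Fin 2) (Fin 2) ℂ := !![0, 1; 1, 0]
def sigmaY : Matrix (Fin 2) (Fin 2) ℂ := !![0, -Complex.I; Complex.I, 0]
def sigmaZ : Matrix (Fin 2) (Fin 2) ℂ := !![1, 0; 0, -1]

/-- `σ_y^{⊗I}` on the qubits indexed by `I`. -/
def sigmaYn {I : Type*} [Fintype I] [DecidableEq I] : Matrix (I → Fin 2) (I → Fin 2) ℂ :=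
  Matrix.of fun x y => ∏ k, sigmaY (x k) (y k)

/-- The `n`-tangle `τ(ψ) = |⟨ψ|σ_y^{⊗n}|ψ*⟩|`. -/
def tangle {I : Type*} [Fintype I] [DecidableEq I] (ψ : (I → Fin 2) → ℂ) : ℝ :=
  ‖(∑ x, ∑ y, conj (ψ x) * sigmaYn x y * conj (ψ y))‖

/-- Entrywise complex conjugate of a matrix. -/
def conjM {I J : Type*} (ρ : Matrix I J ℂ) : Matrix I J ℂ := Matrix.of fun x y => conj (ρ x y)

/-- `ρ̃ = σ_y^{⊗n} ρ* σ_y^{⊗n}`. -/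
def tildeM {I : Type*} [Fintype I] [DecidableEq I] (ρ : Matrix (I → Fin 2) (I → Fin 2) ℂ) :
    Matrix (I → Fin 2) (I → Fin 2) ℂ := sigmaYn * conjM ρ * sigmaYn

/-- The Wootters tilde `|ψ̃⟩ = σ_y^{⊗n}|ψ*⟩`. -/
def wtilde {I : Type*} [Fintype I] [DecidableEq I] (ψ : (I → Fin 2) → ℂ) : (I → Fin 2) → ℂ :=
  sigmaYn.mulVec (fun x => conj (ψ x))

/-- Reduced density matrix of the pure state `ψ` on the qubits in `s`
(tracing out the complement). -/
def reduced {n : ℕ} (s : Finset (Fin n)) (ψ : (Fin n → Fin 2) → ℂ) :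
    Matrix ({i : Fin n // i ∈ s} → Fin 2) ({i : Fin n // i ∈ s} → Fin 2) ℂ :=
  Matrix.of fun a b => ∑ c : {i : Fin n // i ∉ s} → Fin 2,
    ψ (fun i => if h : i ∈ s then a ⟨i, h⟩ else c ⟨i, h⟩) *
    conj (ψ (fun i => if h : i ∈ s then b ⟨i, h⟩ else c ⟨i, h⟩))

/-- GME-concurrence `C_GME(ψ) = min_{∅ ⊊ γ ⊊ [n]} √(2(1 − tr ψ_γ²))`. -/
def gme {n : ℕ} (ψ : (Fin n → Fin 2) → ℂ) : ℝ :=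
  sInf {r : ℝ | ∃ γ : Finset (Fin n), γ ≠ ∅ ∧ γ ≠ Finset.univ ∧
    r = Real.sqrt (2 * (1 - purity (reduced γ ψ)))}

/-- Concentratable entanglement `C(ψ; s) = 1 − 2^{−|s|} Σ_{γ⊆s} tr(ψ_γ²)`. -/
def CE {n : ℕ} (ψ : (Fin n → Fin 2) → ℂ) (s : Finset (Fin n)) : ℝ :=
  1 - (1 / 2 ^ s.card) * ∑ γ ∈ s.powerset, purity (reduced γ ψ)

/-- The subnormalized post-measurement vector `(⟨v|⊗I)|Ψ⟩`. -/
def contract {IA IB : Type*} [Fintype IA] (v : IA → ℂ) (Ψ : IA × IB → ℂ) : IB → ℂ :=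
  fun y => ∑ x, conj (v x) * Ψ (x, y)

/-- Probability `p_v = ⟨Ψ|(|v⟩⟨v| ⊗ I)|Ψ⟩` of outcome `v`. -/
def prob {IA IB : Type*} [Fintype IA] [Fintype IB] (v : IA → ℂ) (Ψ : IA × IB → ℂ) : ℝ :=
  (braket (contract v Ψ) (contract v Ψ)).re

/-- Normalized post-measurement state (the zero vector when the probability vanishes). -/
def postState {IA IB : Type*} [Fintype IA] [Fintype IB] (v : IA → ℂ) (Ψ : IA × IB → ℂ) :
    IB → ℂ := fun y => ((Real.sqrt (prob v Ψ) : ℂ))⁻¹ * contract v Ψ y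

/-- `b` is an orthonormal family. (An orthonormal family indexed by the space's own
index type is an orthonormal basis.) -/
def ONB {J I : Type*} [Fintype I] [DecidableEq J] (b : J → I → ℂ) : Prop :=
  ∀ i j, braket (b i) (b j) = if i = j then 1 else 0

/-- Average post-measurement entanglement `Ē_β(Ψ) = Σ_i p_i E(φ_i)`. -/
def avgE {ι IA IB : Type*} [Fintype ι] [Fintype IA] [Fintype IB]
    (E : (IB → ℂ) → ℝ) (b : ι → IA → ℂ) (Ψ : IA × IB → ℂ) : ℝ :=
  ∑ i, prob (b i) Ψ * E (postState (b i) Ψ)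

/-- Multipartite entanglement of assistance: supremum of `Ē_β` over all
orthonormal bases `β` of `H_A`. -/
def Lglobal {IA IB : Type*} [Fintype IA] [Fintype IB] [DecidableEq IA]
    (E : (IB → ℂ) → ℝ) (Ψ : IA × IB → ℂ) : ℝ :=
  sSup {r : ℝ | ∃ b : IA → IA → ℂ, ONB b ∧ r = avgE E b Ψ}

/-- Tensor-product basis of `(ℂ²)^{⊗K}` built from single-qubit bases. -/
def productBasis {K : Type*} [Fintype K] (q : K → Fin 2 → Fin 2 → ℂ) :
    (K → Fin 2) → (K → Fin 2) → ℂ :=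
  fun i x => ∏ k, q k (i k) (x k)

/-- Localizable multipartite entanglement: supremum of `Ē_β` over product bases of
single-qubit orthonormal bases of `H_A = (ℂ²)^{⊗K}`. -/
def Lloc {K IB : Type*} [Fintype K] [DecidableEq K] [Fintype IB]
    (E : (IB → ℂ) → ℝ) (Ψ : (K → Fin 2) × IB → ℂ) : ℝ :=
  sSup {r : ℝ | ∃ q : K → Fin 2 → Fin 2 → ℂ, (∀ k, ONB (q k)) ∧
    r = avgE E (productBasis q) Ψ}

/-- Partial trace over the `A` system of `|Ψ⟩⟨Ψ|`. -/
def ptraceA {IA IB : Type*} [Fintype IA] (Ψ : IA × IB → ℂ) : Matrix IB IB ℂ :=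
  Matrix.of fun y y' => ∑ x, Ψ (x, y) * conj (Ψ (x, y'))

/-- Reduced density matrix of `|Ψ⟩⟨Ψ|` on the subset `s` of the `B` qubits. -/
def reducedB {IA : Type*} [Fintype IA] {n : ℕ} (s : Finset (Fin n))
    (Ψ : IA × (Fin n → Fin 2) → ℂ) :
    Matrix ({i : Fin n // i ∈ s} → Fin 2) ({i : Fin n // i ∈ s} → Fin 2) ℂ :=
  Matrix.of fun a b => ∑ x : IA, ∑ c : {i : Fin n // i ∉ s} → Fin 2,
    Ψ (x, fun i => if h : i ∈ s then a ⟨i, h⟩ else c ⟨i, h⟩) *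
    conj (Ψ (x, fun i => if h : i ∈ s then b ⟨i, h⟩ else c ⟨i, h⟩))


/-- The `±1` sign contributed by a controlled-Z gate on the (unordered) pair `e` of qubits,
evaluated at the computational basis state `x`. -/
def czSign {n : ℕ} (x : Fin n → Fin 2) : Sym2 (Fin n) → ℂ :=
  Sym2.lift ⟨fun a b => if x a = 1 ∧ x b = 1 then (-1 : ℂ) else 1, by
    intro a b; simp [and_comm]⟩

/-- The graph state `|G⟩ = (Π_{{a,b}∈E} CZ_{ab}) |+⟩^{⊗n}` of a simple graph `G` on `n`
vertices, written out in the computational basis. -/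
def graphState {n : ℕ} (G : SimpleGraph (Fin n)) [DecidableRel G.Adj] :
    (Fin n → Fin 2) → ℂ :=
  fun x => (Real.sqrt (2 ^ n) : ℂ)⁻¹ * ∏ e ∈ G.edgeFinset, czSign x e

/-! ### Auxiliary machinery for Statement 18 -/

open Fin.CommRing

section Fin2Aux

lemma fin2_add_self : ∀ t : Fin 2, t + t = 0 := by decide
lemma fin2_cancel : ∀ s t : Fin 2, s + (s + t) = t := by decide
lemma fin2_flip_add : ∀ s t : Fin 2, (s + 1) + (t + 1) = s + t := by decide
lemma fin2_eq_of_add : ∀ s t : Fin 2, s + t = 0 → t = s := by decide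
lemma fin2_flip_eq_zero : ∀ t : Fin 2, (t + 1 = 0) ↔ (t = 1) := by decide
lemma fin2_flip_flip : ∀ t : Fin 2, (t + 1) + 1 = t := by decide

/-- The sign character of `F₂`. -/
def chi : Fin 2 → ℂ := fun t => if t = 1 then -1 else 1

lemma chi_zero : chi 0 = 1 := rfl

lemma chi_add (s t : Fin 2) : chi (s + t) = chi s * chi t := by
  fin_cases s <;> fin_cases t <;> simp [chi]

lemma chi_conj (t : Fin 2) : conj (chi t) = chi t := by
  fin_cases t <;> simp [chi]

lemma chi_mul_self (t : Fin 2) : chi t * chi t = 1 := by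
  fin_cases t <;> simp [chi]

lemma chi_sum {ι : Type*} (s : Finset ι) (f : ι → Fin 2) :
    chi (∑ i ∈ s, f i) = ∏ i ∈ s, chi (f i) := by
  induction s using Finset.cons_induction with
  | empty => simp [chi]
  | cons a s ha ih => rw [Finset.sum_cons, Finset.prod_cons, chi_add, ih]

lemma chi_pair_sum (t : Fin 2) : (∑ x : Fin 2, chi (x * t)) = if t = 0 then 2 else 0 := by
  fin_cases t <;> simp [Fin.sum_univ_two, chi] <;> norm_num

/-- Orthogonality of characters of `F₂^J`. -/
lemma chi_ortho {J : Type*} [Fintype J] [DecidableEq J] (t : J → Fin 2) :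
    (∑ z : J → Fin 2, chi (∑ j, z j * t j))
      = if t = 0 then (2 : ℂ) ^ Fintype.card J else 0 := by
  have h1 : ∀ z : J → Fin 2, chi (∑ j, z j * t j) = ∏ j, chi (z j * t j) :=
    fun z => chi_sum _ _
  simp_rw [h1]
  have h2 := Finset.prod_univ_sum (fun _ : J => (Finset.univ : Finset (Fin 2)))
    (fun j x => chi (x * t j))
  rw [Fintype.piFinset_univ] at h2
  rw [← h2]
  simp_rw [chi_pair_sum]
  by_cases h : t = 0
  · subst h
    simp [Finset.prod_const, Finset.card_univ]
  · rw [if_neg h]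
    obtain ⟨j, hj⟩ : ∃ j, t j ≠ 0 := by
      by_contra hc; push_neg at hc; exact h (funext hc)
    exact Finset.prod_eq_zero (Finset.mem_univ j) (by rw [if_neg hj])

end Fin2Aux

section GraphAux

variable {N : ℕ} (G : SimpleGraph (Fin N)) [DecidableRel G.Adj] (B : Finset (Fin N))

/-- Ordered pairs `p.1 < p.2` of adjacent vertices: one per edge. -/
def Pset : Finset (Fin N × Fin N) :=
  Finset.univ.filter fun p => p.1 < p.2 ∧ G.Adj p.1 p.2

/-- All ordered adjacent pairs. -/
def OPset : Finset (Fin N × Fin N) :=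
  Finset.univ.filter fun p => G.Adj p.1 p.2

/-- The quadratic form of the graph over `F₂`. -/
def qTot (x : Fin N → Fin 2) : Fin 2 := ∑ p ∈ Pset G, x p.1 * x p.2

def glue (a : {i : Fin N // i ∈ B} → Fin 2) (c : {i : Fin N // i ∉ B} → Fin 2) :
    Fin N → Fin 2 :=
  fun i => if h : i ∈ B then a ⟨i, h⟩ else c ⟨i, h⟩

def bup (d : {i : Fin N // i ∈ B} → Fin 2) : Fin N → Fin 2 :=
  fun i => if h : i ∈ B then d ⟨i, h⟩ else 0

def aup (c : {i : Fin N // i ∉ B} → Fin 2) : Fin N → Fin 2 :=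
  fun i => if h : i ∈ B then 0 else c ⟨i, h⟩

/-- The `F₂`-linear map `Γ_{AB}` recording B–A edges. -/
def Tm (d : {i : Fin N // i ∈ B} → Fin 2) : {i : Fin N // i ∉ B} → Fin 2 :=
  fun v => ∑ u : {i : Fin N // i ∈ B}, if G.Adj u.1 v.1 then d u else 0

/-- Bilinear form over ordered adjacent pairs, both arguments supported in `B`. -/
def Sm (a d : {i : Fin N // i ∈ B} → Fin 2) : Fin 2 :=
  ∑ p ∈ OPset G, bup B a p.1 * bup B d p.2

/-- The vector `D`: `1` iff the `B`-degree is even. -/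
def Dv (u : {i : Fin N // i ∈ B}) : Fin 2 :=
  if Even ((B.filter (fun c => G.Adj u.1 c)).card) then 1 else 0

def Ddot (d : {i : Fin N // i ∈ B} → Fin 2) : Fin 2 := ∑ u, Dv G B u * d u

lemma sum_swap_OPset {M : Type*} [AddCommMonoid M] (f : Fin N × Fin N → M) :
    ∑ p ∈ OPset G, f p = ∑ p ∈ Pset G, (f p + f p.swap) := by
  have hunion : ∑ p ∈ OPset G, f p =
      (∑ p ∈ (OPset G).filter (fun p => p.1 < p.2), f p)
        + ∑ p ∈ (OPset G).filter (fun p => ¬ p.1 < p.2), f p :=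
    (Finset.sum_filter_add_sum_filter_not _ _ _).symm
  have h1 : (OPset G).filter (fun p => p.1 < p.2) = Pset G := by
    ext p
    simp only [OPset, Pset, Finset.mem_filter, Finset.mem_univ, true_and]
    tauto
  have h2 : (OPset G).filter (fun p => ¬ p.1 < p.2) =
      (OPset G).filter (fun p => p.2 < p.1) := by
    ext p
    simp only [OPset, Finset.mem_filter, Finset.mem_univ, true_and]
    constructor
    · rintro ⟨ha, hlt⟩
      exact ⟨ha, lt_of_le_of_ne (not_lt.mp hlt) (Ne.symm ha.ne)⟩
    · rintro ⟨ha, hlt⟩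
      exact ⟨ha, not_lt.mpr hlt.le⟩
  have h3 : ∑ p ∈ (OPset G).filter (fun p => p.2 < p.1), f p
      = ∑ p ∈ Pset G, f p.swap := by
    refine Finset.sum_nbij' Prod.swap Prod.swap ?_ ?_ ?_ ?_ ?_
    · intro p hp
      simp only [OPset, Pset, Finset.mem_filter, Finset.mem_univ, true_and] at hp ⊢
      exact ⟨hp.2, hp.1.symm⟩
    · intro p hp
      simp only [OPset, Pset, Finset.mem_filter, Finset.mem_univ, true_and] at hp ⊢
      exact ⟨hp.2.symm, hp.1⟩
    · intro p _; exact Prod.swap_swap p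
    · intro p _; exact Prod.swap_swap p
    · intro p _; rfl
  rw [hunion, h1, h2, h3, ← Finset.sum_add_distrib]

lemma OPset_expand {M : Type*} [AddCommMonoid M] (g : Fin N → Fin N → M) :
    ∑ p ∈ OPset G, g p.1 p.2 = ∑ i, ∑ j, if G.Adj i j then g i j else 0 := by
  rw [OPset, Finset.sum_filter, Fintype.sum_prod_type]

lemma sum_over_compl {M : Type*} [AddCommMonoid M] (h : Fin N → M)
    (h0 : ∀ i ∈ B, h i = 0) : ∑ i, h i = ∑ v : {i : Fin N // i ∉ B}, h v.1 := by
  rw [← Finset.sum_subtype Bᶜ (fun x => Finset.mem_compl) h]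
  refine (Finset.sum_subset (Finset.subset_univ Bᶜ) fun i _ hi => ?_).symm
  exact h0 i (by simpa using hi)

lemma sum_over_B {M : Type*} [AddCommMonoid M] (h : Fin N → M)
    (h0 : ∀ i, i ∉ B → h i = 0) : ∑ i, h i = ∑ u : {i : Fin N // i ∈ B}, h u.1 := by
  rw [← Finset.sum_subtype B (fun x => Iff.rfl) h]
  exact (Finset.sum_subset (Finset.subset_univ B) fun i _ hi => h0 i hi).symm

lemma czSign_mk (x : Fin N → Fin 2) (u v : Fin N) :
    czSign x s(u, v) = chi (x u * x v) := by
  have h : ∀ s t : Fin 2, (if s = 1 ∧ t = 1 then (-1 : ℂ) else 1) = chi (s * t) := by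
    intro s t; fin_cases s <;> fin_cases t <;> simp [chi]
  simpa [czSign] using h (x u) (x v)

lemma Q_eq (x : Fin N → Fin 2) :
    ∏ e ∈ G.edgeFinset, czSign x e = chi (qTot G x) := by
  rw [qTot, chi_sum]
  refine (Finset.prod_bij (fun (p : Fin N × Fin N) (_ : p ∈ Pset G) => s(p.1, p.2)) ?_ ?_ ?_ ?_
    (f := fun p => chi (x p.1 * x p.2)) (g := czSign x)).symm
  · intro p hp
    simp only [Pset, Finset.mem_filter, Finset.mem_univ, true_and] at hp
    rw [SimpleGraph.mem_edgeFinset, SimpleGraph.mem_edgeSet]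
    exact hp.2
  · intro p hp q hq h
    simp only [Pset, Finset.mem_filter, Finset.mem_univ, true_and] at hp hq
    rcases Sym2.eq_iff.mp h with ⟨h1, h2⟩ | ⟨h1, h2⟩
    · exact Prod.ext h1 h2
    · exact absurd (h1 ▸ h2 ▸ hp.1) (lt_asymm hq.1)
  · intro e he
    rw [SimpleGraph.mem_edgeFinset] at he
    induction e with
    | _ u v =>
      rw [SimpleGraph.mem_edgeSet] at he
      rcases lt_or_gt_of_ne he.ne with h | h
      · exact ⟨(u, v), by simp [Pset, h, he], rfl⟩
      · exact ⟨(v, u), by simp [Pset, h, he.symm], Sym2.eq_swap⟩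
  · intro p _
    exact (czSign_mk x p.1 p.2).symm

lemma fin2_key : ∀ x1 x2 e1 e2 : Fin 2,
    x1 * x2 + (x1 + e1) * (x2 + e2) = (x1 * e2 + e1 * x2) + e1 * e2 := by decide

lemma glue_eq (a : {i : Fin N // i ∈ B} → Fin 2) (c : {i : Fin N // i ∉ B} → Fin 2) :
    glue B a c = bup B a + aup B c := by
  funext i
  by_cases h : i ∈ B <;> simp [glue, bup, aup, h]

lemma bup_add (a b : {i : Fin N // i ∈ B} → Fin 2) :
    bup B (a + b) = bup B a + bup B b := by
  funext i
  by_cases h : i ∈ B <;> simp [bup, h]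

lemma Sm_add_left (a b d : {i : Fin N // i ∈ B} → Fin 2) :
    Sm G B (a + b) d = Sm G B a d + Sm G B b d := by
  simp only [Sm, bup_add, Pi.add_apply, add_mul, Finset.sum_add_distrib]

lemma Sm_self (d : {i : Fin N // i ∈ B} → Fin 2) : Sm G B d d = 0 := by
  rw [Sm, sum_swap_OPset]
  refine Finset.sum_eq_zero fun p _ => ?_
  have : bup B d p.swap.1 * bup B d p.swap.2 = bup B d p.1 * bup B d p.2 := mul_comm _ _
  rw [this, fin2_add_self]

lemma Lm_eq (c : {i : Fin N // i ∉ B} → Fin 2) (d : {i : Fin N // i ∈ B} → Fin 2) :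
    ∑ p ∈ OPset G, aup B c p.1 * bup B d p.2 = ∑ v, c v * Tm G B d v := by
  rw [OPset_expand G (fun i j => aup B c i * bup B d j)]
  have h1 : ∀ i j : Fin N, (if G.Adj i j then aup B c i * bup B d j else 0)
      = aup B c i * (if G.Adj i j then bup B d j else 0) := by
    intro i j; split <;> simp
  simp_rw [h1, ← Finset.mul_sum]
  rw [sum_over_compl B _ (fun i hi => by simp [aup, hi])]
  refine Finset.sum_congr rfl fun v _ => ?_
  have hc : aup B c v.1 = c v := by simp [aup, v.2]
  rw [hc]
  congr 1
  rw [sum_over_B B _ (fun j hj => by simp [bup, hj]), Tm]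
  refine Finset.sum_congr rfl fun u _ => ?_
  have hb : bup B d u.1 = d u := by simp [bup, u.2]
  rw [hb]
  exact if_congr (G.adj_comm v.1 u.1) rfl rfl

lemma key_split (a b : {i : Fin N // i ∈ B} → Fin 2) (c : {i : Fin N // i ∉ B} → Fin 2) :
    qTot G (glue B a c) + qTot G (glue B b c)
      = (qTot G (bup B (a + b)) + Sm G B a (a + b)) + ∑ v, c v * Tm G B (a + b) v := by
  have hy : glue B b c = glue B a c + bup B (a + b) := by
    funext i
    by_cases h : i ∈ B
    · simp only [glue, bup, Pi.add_apply, dif_pos h]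
      exact (fin2_cancel _ _).symm
    · simp [glue, bup, h]
  rw [hy]
  unfold qTot
  rw [← Finset.sum_add_distrib]
  have hterm : ∀ p ∈ Pset G,
      glue B a c p.1 * glue B a c p.2
        + (glue B a c + bup B (a + b)) p.1 * (glue B a c + bup B (a + b)) p.2
      = (glue B a c p.1 * bup B (a + b) p.2 + bup B (a + b) p.1 * glue B a c p.2)
          + bup B (a + b) p.1 * bup B (a + b) p.2 := by
    intro p _
    simp only [Pi.add_apply]
    exact fin2_key _ _ _ _
  rw [Finset.sum_congr rfl hterm, Finset.sum_add_distrib]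
  have hcross : ∑ p ∈ Pset G,
      (glue B a c p.1 * bup B (a + b) p.2 + bup B (a + b) p.1 * glue B a c p.2)
      = ∑ p ∈ OPset G, glue B a c p.1 * bup B (a + b) p.2 := by
    rw [sum_swap_OPset]
    refine Finset.sum_congr rfl fun p _ => ?_
    simp only [Prod.fst_swap, Prod.snd_swap]
    rw [mul_comm (bup B (a + b) p.1)]
  rw [hcross]
  have hsplit : ∑ p ∈ OPset G, glue B a c p.1 * bup B (a + b) p.2
      = Sm G B a (a + b) + ∑ v, c v * Tm G B (a + b) v := by
    have : ∀ p : Fin N × Fin N, glue B a c p.1 * bup B (a + b) p.2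
        = bup B a p.1 * bup B (a + b) p.2 + aup B c p.1 * bup B (a + b) p.2 := by
      intro p
      rw [glue_eq, Pi.add_apply, add_mul]
    simp_rw [this]
    rw [Finset.sum_add_distrib, Lm_eq]
    rfl
  rw [hsplit]
  abel

lemma reduced_apply (ψ : (Fin N → Fin 2) → ℂ)
    (a b : {i : Fin N // i ∈ B} → Fin 2) :
    reduced B ψ a b = ∑ c : {i : Fin N // i ∉ B} → Fin 2,
      ψ (glue B a c) * conj (ψ (glue B b c)) := rfl

lemma graphState_eq (x : Fin N → Fin 2) :
    graphState G x = ((Real.sqrt (2 ^ N) : ℝ) : ℂ)⁻¹ * chi (qTot G x) := by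
  rw [graphState, Q_eq]

lemma rho_apply (a b : {i : Fin N // i ∈ B} → Fin 2) :
    reduced B (graphState G) a b
      = (2 ^ N : ℂ)⁻¹ * (chi (qTot G (bup B (a + b))) * chi (Sm G B a (a + b)))
          * (if Tm G B (a + b) = 0
              then (2 : ℂ) ^ Fintype.card {i : Fin N // i ∉ B} else 0) := by
  rw [reduced_apply]
  have hterm : ∀ c : {i : Fin N // i ∉ B} → Fin 2,
      graphState G (glue B a c) * conj (graphState G (glue B b c))
        = (2 ^ N : ℂ)⁻¹ * (chi (qTot G (bup B (a + b))) * chi (Sm G B a (a + b)))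
            * chi (∑ v, c v * Tm G B (a + b) v) := by
    intro c
    rw [graphState_eq, graphState_eq, map_mul, map_inv₀, Complex.conj_ofReal, chi_conj]
    have hr : ((Real.sqrt (2 ^ N) : ℝ) : ℂ)⁻¹ * ((Real.sqrt (2 ^ N) : ℝ) : ℂ)⁻¹
        = (2 ^ N : ℂ)⁻¹ := by
      rw [← mul_inv, ← Complex.ofReal_mul,
        Real.mul_self_sqrt (by positivity : (0:ℝ) ≤ 2 ^ N)]
      push_cast
      ring
    calc ((Real.sqrt (2 ^ N) : ℝ) : ℂ)⁻¹ * chi (qTot G (glue B a c))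
          * (((Real.sqrt (2 ^ N) : ℝ) : ℂ)⁻¹ * chi (qTot G (glue B b c)))
        = (((Real.sqrt (2 ^ N) : ℝ) : ℂ)⁻¹ * ((Real.sqrt (2 ^ N) : ℝ) : ℂ)⁻¹)
            * (chi (qTot G (glue B a c)) * chi (qTot G (glue B b c))) := by ring
      _ = (2 ^ N : ℂ)⁻¹ * chi (qTot G (glue B a c) + qTot G (glue B b c)) := by
            rw [hr, chi_add]
      _ = (2 ^ N : ℂ)⁻¹ * (chi (qTot G (bup B (a + b))) * chi (Sm G B a (a + b))
            * chi (∑ v, c v * Tm G B (a + b) v)) := by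
            rw [key_split, chi_add, chi_add]
      _ = _ := by ring
  rw [Finset.sum_congr rfl (fun c _ => hterm c), ← Finset.mul_sum,
    chi_ortho (Tm G B (a + b))]

end GraphAux

section SigmaYAux

variable {κ : Type*} [Fintype κ] [DecidableEq κ]

/-- Flip every bit. -/
def flipv (a : κ → Fin 2) : κ → Fin 2 := fun k => a k + 1

lemma flipv_add_flipv (a b : κ → Fin 2) : flipv a + flipv b = a + b := by
  funext k
  exact fin2_flip_add _ _

lemma flipv_eq_comm (a b : κ → Fin 2) : a = flipv b ↔ b = flipv a := by
  constructor <;> rintro rfl <;> funext k <;> exact (fin2_flip_flip _).symm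

lemma sigmaY_apply (t s : Fin 2) :
    sigmaY t s = if s = t + 1 then (if t = 0 then -Complex.I else Complex.I) else 0 := by
  fin_cases t <;> fin_cases s <;> simp [sigmaY]

lemma sigmaYn_apply (x y : κ → Fin 2) :
    sigmaYn x y = if y = flipv x
      then ∏ k, (if x k = 0 then -Complex.I else Complex.I) else 0 := by
  rw [sigmaYn, Matrix.of_apply]
  by_cases h : y = flipv x
  · subst h
    rw [if_pos rfl]
    refine Finset.prod_congr rfl fun k _ => ?_
    rw [sigmaY_apply, if_pos (show flipv x k = x k + 1 from rfl)]
  · rw [if_neg h]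
    obtain ⟨k, hk⟩ : ∃ k, y k ≠ x k + 1 := by
      by_contra hc; push_neg at hc; exact h (funext hc)
    exact Finset.prod_eq_zero (Finset.mem_univ k) (by rw [sigmaY_apply, if_neg hk])

lemma tildeM_apply (ρ : Matrix (κ → Fin 2) (κ → Fin 2) ℂ) (a b : κ → Fin 2) :
    tildeM ρ a b
      = (∏ k, (if a k = 0 then -Complex.I else Complex.I))
          * (∏ k, (if b k = 1 then -Complex.I else Complex.I))
          * conj (ρ (flipv a) (flipv b)) := by
  rw [tildeM]
  have hcond : ∀ y : κ → Fin 2, (b = flipv y) = (y = flipv b) :=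
    fun y => propext (flipv_eq_comm b y)
  simp only [Matrix.mul_apply, sigmaYn_apply, ite_mul, zero_mul, mul_ite, mul_zero]
  simp only [hcond]
  simp only [Finset.sum_ite_eq', Finset.mem_univ, if_true, conjM, Matrix.of_apply]
  have hflip : ∀ k, ((flipv b k = 0) = (b k = 1)) :=
    fun k => propext (fin2_flip_eq_zero (b k))
  simp only [flipv] at hflip ⊢
  simp only [hflip]
  ring

lemma prod_pair_chi (a b : κ → Fin 2) :
    (∏ k, (if a k = 0 then -Complex.I else Complex.I))
      * (∏ k, (if b k = 1 then -Complex.I else Complex.I))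
      = chi (∑ k, (a k + b k)) := by
  rw [chi_sum, ← Finset.prod_mul_distrib]
  refine Finset.prod_congr rfl fun k _ => ?_
  have h : ∀ s t : Fin 2,
      (if s = 0 then -Complex.I else Complex.I) * (if t = 1 then -Complex.I else Complex.I)
        = chi (s + t) := by
    intro s t
    fin_cases s <;> fin_cases t <;> simp [chi, Complex.I_mul_I]
  exact h (a k) (b k)

end SigmaYAux

section TildeAux

variable {N : ℕ} (G : SimpleGraph (Fin N)) [DecidableRel G.Adj] (B : Finset (Fin N))

lemma natCast_fin2 (n : ℕ) : ((n : Fin 2)) = if Even n then 0 else 1 := by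
  induction n with
  | zero => simp
  | succ k ih =>
    rw [Nat.cast_succ, ih]
    by_cases h : Even k <;> simp [h, Nat.even_add_one] <;> rfl

lemma Dv_eq (u : {i : Fin N // i ∈ B}) :
    Dv G B u = 1 + ((B.filter (fun c => G.Adj u.1 c)).card : Fin 2) := by
  rw [Dv, natCast_fin2]
  by_cases h : Even ((B.filter (fun c => G.Adj u.1 c)).card) <;> simp [h] <;> rfl

lemma Sm_ones (d : {i : Fin N // i ∈ B} → Fin 2) :
    Sm G B (fun _ => 1) d
      = ∑ u : {i : Fin N // i ∈ B},
          ((B.filter (fun c => G.Adj u.1 c)).card : Fin 2) * d u := by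
  rw [Sm, OPset_expand G (fun i j => bup B (fun _ => 1) i * bup B d j)]
  have h1 : ∀ i j : Fin N,
      (if G.Adj i j then bup B (fun _ => 1) i * bup B d j else 0)
        = (if G.Adj i j then bup B (fun _ => 1) i else 0) * bup B d j := by
    intro i j; split <;> simp
  simp_rw [h1]
  rw [Finset.sum_comm]
  simp_rw [← Finset.sum_mul]
  rw [sum_over_B B _ (fun j hj => by simp [bup, hj])]
  refine Finset.sum_congr rfl fun u _ => ?_
  have hb : bup B d u.1 = d u := by simp [bup, u.2]
  rw [hb]
  congr 1
  rw [sum_over_B B _ (fun i hi => by simp [bup, hi])]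
  have h2 : ∀ w : {i : Fin N // i ∈ B},
      (if G.Adj w.1 u.1 then bup B (fun _ => 1) w.1 else 0)
        = (if G.Adj u.1 w.1 then (1 : Fin 2) else 0) := by
    intro w
    have hw : bup B (fun _ => (1 : Fin 2)) w.1 = 1 := by simp [bup, w.2]
    rw [hw]
    exact if_congr (G.adj_comm w.1 u.1) rfl rfl
  rw [Finset.sum_congr rfl (fun w _ => h2 w),
    ← Finset.sum_subtype B (fun x => Iff.rfl)
      (fun i => if G.Adj u.1 i then (1 : Fin 2) else 0)]
  simp [Finset.sum_boole]

lemma sum_add_Sm_ones (d : {i : Fin N // i ∈ B} → Fin 2) :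
    (∑ u, d u) + Sm G B (fun _ => 1) d = Ddot G B d := by
  rw [Sm_ones, Ddot, ← Finset.sum_add_distrib]
  refine Finset.sum_congr rfl fun u _ => ?_
  rw [Dv_eq]
  ring

lemma rho_real (a b : {i : Fin N // i ∈ B} → Fin 2) :
    conj (reduced B (graphState G) a b) = reduced B (graphState G) a b := by
  rw [rho_apply]
  simp only [map_mul, map_inv₀, map_pow, chi_conj, apply_ite (starRingEnd ℂ),
    map_ofNat, map_zero]

lemma rho_flip (a b : {i : Fin N // i ∈ B} → Fin 2) :
    reduced B (graphState G) (flipv a) (flipv b)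
      = chi (Sm G B (fun _ => 1) (a + b)) * reduced B (graphState G) a b := by
  rw [rho_apply, rho_apply, flipv_add_flipv]
  have hSm : Sm G B (flipv a) (a + b)
      = Sm G B (fun _ => 1) (a + b) + Sm G B a (a + b) := by
    have hfa : flipv a = (fun _ => (1 : Fin 2)) + a := by
      funext k
      simp only [flipv, Pi.add_apply]
      exact add_comm _ _
    rw [hfa, Sm_add_left]
  rw [hSm, chi_add]
  ring

lemma tilde_rho (a b : {i : Fin N // i ∈ B} → Fin 2) :
    tildeM (reduced B (graphState G)) a b
      = chi (Ddot G B (a + b)) * reduced B (graphState G) a b := by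
  rw [tildeM_apply, prod_pair_chi, rho_real, rho_flip]
  have : (∑ k, (a k + b k)) = ∑ u, (a + b) u := rfl
  rw [this, ← mul_assoc, ← chi_add, sum_add_Sm_ones]

end TildeAux

section PsdAux

variable {I : Type*} [Fintype I] [DecidableEq I]

open scoped MatrixOrder

lemma psdSqrt_eq {A : Matrix I I ℂ} (h : A.PosSemidef) : psdSqrt A = CFC.sqrt A := by
  rw [psdSqrt, dif_pos h, CFC.sqrt_eq_cfc, cfc_nnreal_eq_real _ A h.nonneg, h.1.cfc_eq,
    Matrix.IsHermitian.cfc, Unitary.conjStarAlgAut_apply]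
  congr 2
  refine congrArg Matrix.diagonal (funext fun i => ?_)
  simp [Real.coe_sqrt, max_eq_left (h.eigenvalues_nonneg i)]

lemma psd_trace_zero {M : Matrix I I ℂ} (h : M.PosSemidef) (htr : M.trace = 0) :
    M = 0 := by
  obtain ⟨C, rfl⟩ : ∃ C : Matrix I I ℂ, M = C.conjTranspose * C :=
    ⟨CFC.sqrt M, by rw [(Matrix.nonneg_iff_posSemidef.mp (CFC.sqrt_nonneg M)).1.eq, CFC.sqrt_mul_sqrt_self M h.nonneg]⟩
  have h1 : (C.conjTranspose * C).trace = ∑ i, ∑ j, ((Complex.normSq (C j i) : ℝ) : ℂ) := by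
    rw [Matrix.trace]
    refine Finset.sum_congr rfl fun i _ => ?_
    rw [Matrix.diag_apply, Matrix.mul_apply]
    refine Finset.sum_congr rfl fun j _ => ?_
    rw [Matrix.conjTranspose_apply, mul_comm]
    exact Complex.mul_conj _
  rw [h1] at htr
  have h2 : (∑ i, ∑ j, Complex.normSq (C j i)) = 0 := by
    exact_mod_cast htr
  have h3 : ∀ i ∈ (Finset.univ : Finset I), ∑ j, Complex.normSq (C j i) = 0 := by
    rw [← Finset.sum_eq_zero_iff_of_nonneg]
    · exact h2
    · intro i _
      exact Finset.sum_nonneg fun j _ => Complex.normSq_nonneg _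
  have hC : C = 0 := by
    ext j i
    have h4 := (Finset.sum_eq_zero_iff_of_nonneg
      (fun j _ => Complex.normSq_nonneg (C j i))).mp (h3 i (Finset.mem_univ i))
    exact Complex.normSq_eq_zero.mp (h4 j (Finset.mem_univ j))
  rw [hC]
  simp

lemma psdSqrt_zero : psdSqrt (0 : Matrix I I ℂ) = 0 := by
  have h0 : (0 : Matrix I I ℂ).PosSemidef := Matrix.PosSemidef.zero
  rw [psdSqrt_eq h0, CFC.sqrt_zero]

lemma fidelity_self_of (ρ : Matrix I I ℂ) (h : ρ.PosSemidef) (htr : ρ.trace = 1) :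
    fidelity ρ ρ = 1 := by
  have hs : psdSqrt ρ = CFC.sqrt ρ := psdSqrt_eq h
  have h2 : psdSqrt ρ * ρ * psdSqrt ρ = ρ * ρ := by
    obtain ⟨S, hS1, hS2⟩ : ∃ S : Matrix I I ℂ, S = CFC.sqrt ρ ∧ S * S = ρ :=
      ⟨CFC.sqrt ρ, rfl, CFC.sqrt_mul_sqrt_self ρ h.nonneg⟩
    rw [hs, ← hS1, ← hS2]
    noncomm_ring
  have hρ2 : (ρ * ρ).PosSemidef := by
    have := Matrix.posSemidef_conjTranspose_mul_self ρ
    rwa [h.1.eq] at this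
  have h3 : psdSqrt (ρ * ρ) = ρ := by
    rw [psdSqrt_eq hρ2]
    exact CFC.sqrt_unique rfl h.nonneg
  rw [fidelity, h2, h3, htr]
  simp

lemma fidelity_zero_of (ρ σ : Matrix I I ℂ) (h : ρ.PosSemidef)
    (htr : (ρ * σ).trace = 0) : fidelity ρ σ = 0 := by
  rw [fidelity]
  by_cases hpsd : (psdSqrt ρ * σ * psdSqrt ρ).PosSemidef
  · have hs : psdSqrt ρ = CFC.sqrt ρ := psdSqrt_eq h
    have htrM : (psdSqrt ρ * σ * psdSqrt ρ).trace = 0 := by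
      rw [hs, Matrix.trace_mul_comm, ← Matrix.mul_assoc, CFC.sqrt_mul_sqrt_self ρ h.nonneg]
      exact htr
    rw [psd_trace_zero hpsd htrM, psdSqrt_zero]
    simp
  · rw [psdSqrt, dif_neg hpsd]
    simp

end PsdAux

section RhoPsd

variable {N : ℕ} (G : SimpleGraph (Fin N)) [DecidableRel G.Adj] (B : Finset (Fin N))

lemma psd_reduced : (reduced B (graphState G)).PosSemidef := by
  have h : reduced B (graphState G)
      = (Matrix.of fun (a : {i : Fin N // i ∈ B} → Fin 2)
            (c : {i : Fin N // i ∉ B} → Fin 2) => graphState G (glue B a c))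
        * (Matrix.of fun (a : {i : Fin N // i ∈ B} → Fin 2)
            (c : {i : Fin N // i ∉ B} → Fin 2) => graphState G (glue B a c)).conjTranspose := by
    ext a b
    simp only [Matrix.mul_apply, Matrix.conjTranspose_apply, Matrix.of_apply]
    rfl
  rw [h]
  exact Matrix.posSemidef_self_mul_conjTranspose _

lemma card_split : Fintype.card {i : Fin N // i ∈ B}
    + Fintype.card {i : Fin N // i ∉ B} = N := by
  have e := Fintype.card_congr (Equiv.sumCompl (fun i : Fin N => i ∈ B)).symm
  rw [Fintype.card_sum, Fintype.card_fin] at e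
  omega

lemma Tm_zero : Tm G B 0 = 0 := by
  funext v
  rw [Tm]
  refine Finset.sum_eq_zero fun u _ => ?_
  simp

lemma bup_zero : bup B 0 = 0 := by
  funext i
  by_cases h : i ∈ B <;> simp [bup, h]

lemma trace_rho : (reduced B (graphState G)).trace = 1 := by
  rw [Matrix.trace]
  have hterm : ∀ a : {i : Fin N // i ∈ B} → Fin 2,
      (reduced B (graphState G)).diag a
        = (2 ^ N : ℂ)⁻¹ * (2 : ℂ) ^ Fintype.card {i : Fin N // i ∉ B} := by
    intro a
    rw [Matrix.diag_apply, rho_apply]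
    have haa : a + a = 0 := funext fun u => fin2_add_self (a u)
    rw [haa, Tm_zero, if_pos rfl, bup_zero]
    have h1 : qTot G 0 = 0 := by
      rw [qTot]
      exact Finset.sum_eq_zero fun p _ => by simp
    have h2 : Sm G B a 0 = 0 := by
      rw [Sm, bup_zero]
      exact Finset.sum_eq_zero fun p _ => by simp
    rw [h1, h2, chi_zero]
    ring
  rw [Finset.sum_congr rfl (fun a _ => hterm a), Finset.sum_const, Finset.card_univ,
    Fintype.card_fun, Fintype.card_fin, nsmul_eq_mul]
  push_cast
  have hpow : (2 : ℂ) ^ N = 2 ^ Fintype.card {i : Fin N // i ∈ B}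
      * 2 ^ Fintype.card {i : Fin N // i ∉ B} := by
    rw [← pow_add, card_split]
  rw [hpow]
  have ha : ((2 : ℂ) ^ Fintype.card {i : Fin N // i ∈ B}) ≠ 0 := by positivity
  have hb : ((2 : ℂ) ^ Fintype.card {i : Fin N // i ∉ B}) ≠ 0 := by positivity
  field_simp

end RhoPsd

/-- Let `G` be a graph whose vertices are partitioned into nonempty sets
`A` and `B` with `|B|` even, let `G_B` be the reduced state of the graph state `|G⟩` on `B`
and `G̃_B = σ_y^{⊗N_B} G_B* σ_y^{⊗N_B}`. Then `F(G_B, G̃_B) = 1` if `Γ_BA x = D` is solvable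
over `F₂` (where `Γ_BA` records the edges between `B` and `A`, and `D_b = 1` iff `b` has
even degree in the induced subgraph `G − A`), and `F(G_B, G̃_B) = 0` otherwise. -/
theorem graph_state_fidelity_criterion
    (N : ℕ) (G : SimpleGraph (Fin N)) [DecidableRel G.Adj]
    (A B : Finset (Fin N)) (hA : A.Nonempty) (hB : B.Nonempty)
    (hdisj : Disjoint A B) (hunion : A ∪ B = Finset.univ)
    (hEven : Even B.card) :
    ((∃ x : {i : Fin N // i ∈ A} → Fin 2,
        ∀ b : {i : Fin N // i ∈ B},
          (∑ a : {i : Fin N // i ∈ A}, if G.Adj b.1 a.1 then x a else 0) =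
            (if Even ((B.filter (fun c => G.Adj b.1 c)).card) then (1 : Fin 2) else 0)) →
      fidelity (reduced B (graphState G)) (tildeM (reduced B (graphState G))) = 1) ∧
    (¬ (∃ x : {i : Fin N // i ∈ A} → Fin 2,
        ∀ b : {i : Fin N // i ∈ B},
          (∑ a : {i : Fin N // i ∈ A}, if G.Adj b.1 a.1 then x a else 0) =
            (if Even ((B.filter (fun c => G.Adj b.1 c)).card) then (1 : Fin 2) else 0)) →
      fidelity (reduced B (graphState G)) (tildeM (reduced B (graphState G))) = 0) := by
  classical
  have hAB : ∀ i : Fin N, i ∈ A ↔ i ∉ B := by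
    intro i
    constructor
    · intro hiA hiB
      exact Finset.disjoint_left.mp hdisj hiA hiB
    · intro hiB
      have hmem : i ∈ A ∪ B := hunion ▸ Finset.mem_univ i
      rcases Finset.mem_union.mp hmem with h | h
      · exact h
      · exact absurd h hiB
  constructor
  · rintro ⟨x, hx⟩
    have heq : tildeM (reduced B (graphState G)) = reduced B (graphState G) := by
      ext a b
      rw [tilde_rho]
      by_cases hT : Tm G B (a + b) = 0
      · have hD : Ddot G B (a + b) = 0 := by
          set x' : {i : Fin N // i ∉ B} → Fin 2 :=
            fun v => x ⟨v.1, (hAB v.1).mpr v.2⟩ with hx'def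
          have hDv : ∀ u : {i : Fin N // i ∈ B},
              Dv G B u = ∑ v : {i : Fin N // i ∉ B},
                (if G.Adj u.1 v.1 then x' v else 0) := by
            intro u
            rw [Dv, ← hx u]
            exact Fintype.sum_equiv (Equiv.subtypeEquivRight hAB)
              (fun a' => if G.Adj u.1 a'.1 then x a' else 0)
              (fun v => if G.Adj u.1 v.1 then x' v else 0)
              (fun a' => rfl)
          rw [Ddot, Finset.sum_congr rfl (fun u _ => by rw [hDv u])]
          have hswap : ∑ u : {i : Fin N // i ∈ B},
              (∑ v : {i : Fin N // i ∉ B}, if G.Adj u.1 v.1 then x' v else 0) * (a + b) u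
              = ∑ v : {i : Fin N // i ∉ B}, x' v * Tm G B (a + b) v := by
            simp_rw [Finset.sum_mul]
            rw [Finset.sum_comm]
            refine Finset.sum_congr rfl fun v _ => ?_
            rw [Tm, Finset.mul_sum]
            refine Finset.sum_congr rfl fun u _ => ?_
            split <;> ring
          rw [hswap, hT]
          simp
        rw [hD, chi_zero, one_mul]
      · have h0 : reduced B (graphState G) a b = 0 := by
          rw [rho_apply, if_neg hT, mul_zero]
        rw [h0, mul_zero]
    rw [heq]
    exact fidelity_self_of _ (psd_reduced G B) (trace_rho G B)
  · intro hns
    have hkey : ∑ k : {i : Fin N // i ∈ B} → Fin 2,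
        chi (Ddot G B k) * (if Tm G B k = 0 then 1 else 0) = 0 := by
      have hmain : (2 : ℂ) ^ Fintype.card {i : Fin N // i ∉ B}
          * ∑ k : {i : Fin N // i ∈ B} → Fin 2,
              chi (Ddot G B k) * (if Tm G B k = 0 then 1 else 0) = 0 := by
        rw [Finset.mul_sum]
        have hstep : ∀ k : {i : Fin N // i ∈ B} → Fin 2,
            (2 : ℂ) ^ Fintype.card {i : Fin N // i ∉ B}
              * (chi (Ddot G B k) * (if Tm G B k = 0 then 1 else 0))
            = ∑ z : {i : Fin N // i ∉ B} → Fin 2,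
                chi (Ddot G B k + ∑ v, z v * Tm G B k v) := by
          intro k
          rw [Finset.sum_congr rfl (fun z (_ : z ∈ Finset.univ) => chi_add (Ddot G B k) _),
            ← Finset.mul_sum, chi_ortho]
          by_cases hTk : Tm G B k = 0 <;> simp only [hTk, if_pos, if_neg, if_true] <;>
            simp [hTk] <;> ring
        rw [Finset.sum_congr rfl (fun k _ => hstep k), Finset.sum_comm]
        have hexp : ∀ (z : {i : Fin N // i ∉ B} → Fin 2)
            (k : {i : Fin N // i ∈ B} → Fin 2),
            Ddot G B k + ∑ v, z v * Tm G B k v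
              = ∑ u, k u * (Dv G B u + ∑ v, (if G.Adj u.1 v.1 then z v else 0)) := by
          intro z k
          have h1 : ∑ v, z v * Tm G B k v
              = ∑ u, (∑ v, (if G.Adj u.1 v.1 then z v else 0)) * k u := by
            simp_rw [Tm, Finset.mul_sum]
            rw [Finset.sum_comm]
            simp_rw [Finset.sum_mul]
            refine Finset.sum_congr rfl fun u _ => Finset.sum_congr rfl fun v _ => ?_
            split <;> ring
          rw [Ddot, h1, ← Finset.sum_add_distrib]
          exact Finset.sum_congr rfl fun u _ => by ring
        rw [Finset.sum_congr rfl
          (fun z _ => Finset.sum_congr rfl (fun k _ => by rw [hexp z k]))]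
        refine Finset.sum_eq_zero fun z _ => ?_
        rw [chi_ortho (fun u => Dv G B u + ∑ v, (if G.Adj u.1 v.1 then z v else 0))]
        have htne : (fun u => Dv G B u
            + ∑ v, (if G.Adj u.1 v.1 then z v else 0)) ≠ 0 := by
          intro ht0
          apply hns
          refine ⟨fun a' => z ⟨a'.1, (hAB a'.1).mp a'.2⟩, fun u => ?_⟩
          have h5 : Dv G B u + (∑ v, if G.Adj u.1 v.1 then z v else 0) = 0 :=
            congrFun ht0 u
          have h6 : (∑ v, if G.Adj u.1 v.1 then z v else 0) = Dv G B u :=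
            fin2_eq_of_add _ _ h5
          have h7 : (if Even ((B.filter (fun c => G.Adj u.1 c)).card)
              then (1 : Fin 2) else 0) = Dv G B u := rfl
          rw [h7, ← h6]
          exact Fintype.sum_equiv (Equiv.subtypeEquivRight hAB)
            (fun a' => if G.Adj u.1 a'.1 then z ⟨a'.1, (hAB a'.1).mp a'.2⟩ else 0)
            (fun v => if G.Adj u.1 v.1 then z v else 0)
            (fun a' => rfl)
        rw [if_neg htne]
      have h2 : ((2 : ℂ) ^ Fintype.card {i : Fin N // i ∉ B}) ≠ 0 := by positivity
      exact (mul_eq_zero.mp hmain).resolve_left h2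
    have htr : (reduced B (graphState G) * tildeM (reduced B (graphState G))).trace
        = 0 := by
      rw [Matrix.trace]
      refine Finset.sum_eq_zero fun a _ => ?_
      have hb : ∀ b : {i : Fin N // i ∈ B} → Fin 2,
          reduced B (graphState G) a b * tildeM (reduced B (graphState G)) b a
            = ((2 ^ N : ℂ)⁻¹ * 2 ^ Fintype.card {i : Fin N // i ∉ B}) ^ 2
                * (chi (Ddot G B (a + b)) * (if Tm G B (a + b) = 0 then 1 else 0)) := by
        intro b
        rw [tilde_rho]
        have hba : b + a = a + b := add_comm b a
        rw [hba, rho_apply, rho_apply, hba]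
        by_cases hT : Tm G B (a + b) = 0
        · rw [if_pos hT, if_pos hT]
          have hq : chi (qTot G (bup B (a + b))) * chi (qTot G (bup B (a + b))) = 1 :=
            chi_mul_self _
          have hS : chi (Sm G B a (a + b)) * chi (Sm G B b (a + b)) = 1 := by
            rw [← chi_add, ← Sm_add_left, Sm_self, chi_zero]
          calc (2 ^ N : ℂ)⁻¹ * (chi (qTot G (bup B (a + b))) * chi (Sm G B a (a + b)))
                  * (2 : ℂ) ^ Fintype.card {i : Fin N // i ∉ B}
                * (chi (Ddot G B (a + b))
                  * ((2 ^ N : ℂ)⁻¹ * (chi (qTot G (bup B (a + b))) * chi (Sm G B b (a + b)))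
                    * (2 : ℂ) ^ Fintype.card {i : Fin N // i ∉ B}))
              = ((2 ^ N : ℂ)⁻¹ * 2 ^ Fintype.card {i : Fin N // i ∉ B}) ^ 2
                  * chi (Ddot G B (a + b))
                  * ((chi (qTot G (bup B (a + b))) * chi (qTot G (bup B (a + b))))
                    * (chi (Sm G B a (a + b)) * chi (Sm G B b (a + b)))) := by ring
            _ = _ := by rw [hq, hS]; ring
        · rw [if_neg hT, if_neg hT]
          ring
      rw [Matrix.diag_apply, Matrix.mul_apply,
        Finset.sum_congr rfl (fun b (_ : b ∈ Finset.univ) => hb b), ← Finset.mul_sum]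
      have hre : ∑ b : {i : Fin N // i ∈ B} → Fin 2,
          chi (Ddot G B (a + b)) * (if Tm G B (a + b) = 0 then 1 else 0)
          = ∑ k : {i : Fin N // i ∈ B} → Fin 2,
              chi (Ddot G B k) * (if Tm G B k = 0 then 1 else 0) :=
        Fintype.sum_equiv (Equiv.addLeft a) _ _ (fun b => rfl)
      rw [hre, hkey, mul_zero]
    exact fidelity_zero_of _ _ (psd_reduced G B) htr

end QIpaper
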